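/- arXiv:1707.06724 — 3 statements merged into one kernel-verified Lean document; each statement's English description precedes it below -/
import Mathlib

section
/- For all real numbers γ > 0, γ⁰ > 0, t > 0, t⁰ > 0, the inequality ln(1+γ)/t ≥ A − B·(1/γ) − C·t holds, where A = 2·ln(1+γ⁰)/t⁰ + γ⁰/(t⁰·(γ⁰+1)), B = (γ⁰)²/(t⁰·(γ⁰+1)), and C = ln(1+γ⁰)/(t⁰)². -/
open Real Set

/-- For `1 ≤ z`, `log z ≤ z/2 - z⁻¹/2`. -/
lemma log_le_pade {z : ℝ} (hz : 1 ≤ z) : Real.log z ≤ z / 2 - z⁻¹ / 2 := by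
  set f : ℝ → ℝ := fun x => x / 2 - x⁻¹ / 2 - Real.log x with hf
  have hd : ∀ x : ℝ, 0 < x → HasDerivAt f (1 / 2 - (-(x ^ 2)⁻¹) / 2 - x⁻¹) x := by
    intro x hx0
    have d1 : HasDerivAt (fun x : ℝ => x / 2) (1 / 2) x := by
      simpa using (hasDerivAt_id x).div_const 2
    have d2 : HasDerivAt (fun x : ℝ => x⁻¹ / 2) ((-(x ^ 2)⁻¹) / 2) x := by
      simpa using (hasDerivAt_inv (ne_of_gt hx0)).div_const 2
    have d3 : HasDerivAt Real.log x⁻¹ x := Real.hasDerivAt_log (ne_of_gt hx0)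
    exact (d1.sub d2).sub d3
  have key : MonotoneOn f (Ici 1) := by
    apply monotoneOn_of_hasDerivWithinAt_nonneg (convex_Ici 1)
      (f' := fun x => 1 / 2 - (-(x ^ 2)⁻¹) / 2 - x⁻¹)
    · intro x hx
      have hx0 : (0:ℝ) < x := lt_of_lt_of_le one_pos hx
      exact (hd x hx0).continuousAt.continuousWithinAt
    · intro x hx
      rw [interior_Ici] at hx
      exact (hd x (lt_trans one_pos hx)).hasDerivWithinAt
    · intro x hx
      rw [interior_Ici] at hx
      have hx0 : (0:ℝ) < x := lt_trans one_pos hx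
      have : 1 / 2 - (-(x ^ 2)⁻¹) / 2 - x⁻¹ = (x - 1) ^ 2 / (2 * x ^ 2) := by
        field_simp; ring
      rw [this]; positivity
  have h1 : f 1 ≤ f z := key (by simp) (by exact hz) hz
  have h0 : f 1 = 0 := by simp [hf]
  rw [h0] at h1
  simp only [hf] at h1
  linarith

/-- For `1 ≤ w`, `2*(w-1)/(w+1) ≤ log w`, in the form `2 - 4*(w+1)⁻¹ ≤ log w`. -/
lemma pade_le_log {w : ℝ} (hw : 1 ≤ w) : 2 - 4 * (w + 1)⁻¹ ≤ Real.log w := by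
  set g : ℝ → ℝ := fun x => Real.log x - 2 + 4 * (x + 1)⁻¹ with hg
  have hd : ∀ x : ℝ, 0 < x →
      HasDerivAt g (x⁻¹ + 4 * (-(1) / (x + 1) ^ 2)) x := by
    intro x hx0
    have d1 : HasDerivAt Real.log x⁻¹ x := Real.hasDerivAt_log (ne_of_gt hx0)
    have d2 : HasDerivAt (fun x : ℝ => x + 1) 1 x := (hasDerivAt_id x).add_const 1
    have d3 : HasDerivAt (fun x : ℝ => (x + 1)⁻¹) (-(1) / (x + 1) ^ 2) x :=
      d2.inv (by positivity)
    exact (d1.sub_const 2).add (d3.const_mul 4)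
  have key : MonotoneOn g (Ici 1) := by
    apply monotoneOn_of_hasDerivWithinAt_nonneg (convex_Ici 1)
      (f' := fun x => x⁻¹ + 4 * (-(1) / (x + 1) ^ 2))
    · intro x hx
      exact (hd x (lt_of_lt_of_le one_pos hx)).continuousAt.continuousWithinAt
    · intro x hx
      rw [interior_Ici] at hx
      exact (hd x (lt_trans one_pos hx)).hasDerivWithinAt
    · intro x hx
      rw [interior_Ici] at hx
      have hx0 : (0:ℝ) < x := lt_trans one_pos hx
      have : x⁻¹ + 4 * (-(1) / (x + 1) ^ 2) = (x - 1) ^ 2 / (x * (x + 1) ^ 2) := by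
        field_simp; ring
      rw [this]; positivity
  have h1 : g 1 ≤ g w := key (by simp) (by exact hw) hw
  have h0 : g 1 = 0 := by norm_num [hg]
  rw [h0] at h1
  simp only [hg] at h1
  linarith


set_option maxHeartbeats 1000000 in
lemma key (γ γ₀ : ℝ) (hγ : 0 < γ) (hγ₀ : 0 < γ₀)
    (hE : 0 ≤ 2 * Real.log (1 + γ₀) * ((γ₀ + 1) * γ) + (γ₀ * γ - γ₀ ^ 2)) :
    (2 * Real.log (1 + γ₀) * ((γ₀ + 1) * γ) + (γ₀ * γ - γ₀ ^ 2)) ^ 2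
      ≤ 4 * Real.log (1 + γ) * Real.log (1 + γ₀) * ((γ₀ + 1) * γ) ^ 2 := by
  set L := Real.log (1 + γ) with hLdef
  set L₀ := Real.log (1 + γ₀) with hL0def
  have ha : (0:ℝ) < 1 + γ := by linarith
  have hb : (0:ℝ) < 1 + γ₀ := by linarith
  have hL : 0 < L := Real.log_pos (by linarith)
  have hL₀ : 0 < L₀ := Real.log_pos (by linarith)
  have h2 : 2 * γ ≤ L * (2 + γ) := by
    have h := pade_le_log (w := 1 + γ) (by linarith)
    rw [← hLdef] at h
    have he : ((1:ℝ) + γ + 1)⁻¹ * (2 + γ) = 1 := by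
      rw [inv_mul_eq_div, div_eq_one_iff_eq (by linarith)]; ring
    have hp : (0:ℝ) < 2 + γ := by linarith
    nlinarith [mul_le_mul_of_nonneg_right h hp.le]
  have h4 : 2 * γ₀ ≤ L₀ * (2 + γ₀) := by
    have h := pade_le_log (w := 1 + γ₀) (by linarith)
    rw [← hL0def] at h
    have he : ((1:ℝ) + γ₀ + 1)⁻¹ * (2 + γ₀) = 1 := by
      rw [inv_mul_eq_div, div_eq_one_iff_eq (by linarith)]; ring
    have hp : (0:ℝ) < 2 + γ₀ := by linarith
    nlinarith [mul_le_mul_of_nonneg_right h hp.le]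
  rcases le_total γ₀ γ with hcase | hcase
  · -- γ₀ ≤ γ
    have hw1 : (1:ℝ) ≤ (1 + γ) / (1 + γ₀) := by
      rw [le_div_iff₀ hb]; linarith
    have h := pade_le_log hw1
    rw [Real.log_div (by linarith) (by linarith), ← hLdef, ← hL0def] at h
    have hσ : (0:ℝ) < 2 + γ + γ₀ := by linarith
    have heq : 2 - 4 * ((1 + γ) / (1 + γ₀) + 1)⁻¹ = 2 * (γ - γ₀) / (2 + γ + γ₀) := by
      rw [div_add_one (ne_of_gt hb), inv_div]
      field_simp
      ring
    rw [heq, div_le_iff₀ hσ] at h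
    have k1 : 2 * (γ - γ₀) * (4 * L₀ * ((γ₀ + 1) * γ) ^ 2)
        ≤ (L - L₀) * (2 + γ + γ₀) * (4 * L₀ * ((γ₀ + 1) * γ) ^ 2) :=
      mul_le_mul_of_nonneg_right h (by positivity)
    have k2 : 2 * γ₀ * (4 * ((γ₀ + 1) * γ) * (γ - γ₀) ^ 2)
        ≤ L₀ * (2 + γ₀) * (4 * ((γ₀ + 1) * γ) * (γ - γ₀) ^ 2) :=
      mul_le_mul_of_nonneg_right h4 (by positivity)
    have k3 : 0 ≤ γ₀ * (γ - γ₀) ^ 2 * (8 * ((γ₀ + 1) * γ) - γ₀ * (2 + γ + γ₀)) := by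
      have : 0 ≤ 8 * ((γ₀ + 1) * γ) - γ₀ * (2 + γ + γ₀) := by nlinarith
      positivity
    nlinarith [k1, k2, k3, hσ]
  · -- γ ≤ γ₀
    have hP : γ₀ * γ - γ₀ ^ 2 ≤ 0 := by nlinarith
    have hw1 : (1:ℝ) ≤ (1 + γ₀) / (1 + γ) := by
      rw [le_div_iff₀ ha]; linarith
    have h := log_le_pade hw1
    rw [Real.log_div (by linarith) (by linarith), ← hLdef, ← hL0def] at h
    have heq : (1 + γ₀) / (1 + γ) / 2 - ((1 + γ₀) / (1 + γ))⁻¹ / 2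
        = ((1 + γ₀) ^ 2 - (1 + γ) ^ 2) / (2 * (1 + γ) * (1 + γ₀)) := by
      rw [inv_div]; field_simp
    rw [heq, le_div_iff₀ (by positivity)] at h
    -- h : (L₀ - L) * (2 * (1+γ) * (1+γ₀)) ≤ (1+γ₀)^2 - (1+γ)^2
    rcases le_or_gt ((2 * L₀ * ((γ₀ + 1) * γ) + (γ₀ * γ - γ₀ ^ 2)) * (2 + γ))
        (4 * ((γ₀ + 1) * γ) * γ) with hsub | hsub
    · have hE2 : 2 * L₀ * ((γ₀ + 1) * γ) + (γ₀ * γ - γ₀ ^ 2) ≤ 2 * L₀ * ((γ₀ + 1) * γ) := by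
        linarith
      have t1 : (2 * L₀ * ((γ₀ + 1) * γ) + (γ₀ * γ - γ₀ ^ 2)) *
            ((2 * L₀ * ((γ₀ + 1) * γ) + (γ₀ * γ - γ₀ ^ 2)) * (2 + γ))
          ≤ (2 * L₀ * ((γ₀ + 1) * γ) + (γ₀ * γ - γ₀ ^ 2)) * (4 * ((γ₀ + 1) * γ) * γ) :=
        mul_le_mul_of_nonneg_left hsub hE
      have t2 : (2 * L₀ * ((γ₀ + 1) * γ) + (γ₀ * γ - γ₀ ^ 2)) * (4 * ((γ₀ + 1) * γ) * γ)
          ≤ 2 * L₀ * ((γ₀ + 1) * γ) * (4 * ((γ₀ + 1) * γ) * γ) :=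
        mul_le_mul_of_nonneg_right hE2 (by positivity)
      have t3 : 2 * γ * (4 * L₀ * ((γ₀ + 1) * γ) ^ 2)
          ≤ L * (2 + γ) * (4 * L₀ * ((γ₀ + 1) * γ) ^ 2) :=
        mul_le_mul_of_nonneg_right h2 (by positivity)
      have hp : (0:ℝ) < 2 + γ := by linarith
      nlinarith [t1, t2, t3, hp]
    · -- large L₀ regime
      have hc : 4 * ((γ₀ + 1) * γ) * γ - (γ₀ * γ - γ₀ ^ 2) * (2 + γ)
          ≤ 2 * L₀ * ((γ₀ + 1) * γ) * (2 + γ) := by nlinarith [hsub]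
      have hmul : (4 * ((γ₀ + 1) * γ) * γ - (γ₀ * γ - γ₀ ^ 2) * (2 + γ)) * (2 * (γ - γ₀) ^ 2)
          ≤ 2 * L₀ * ((γ₀ + 1) * γ) * (2 + γ) * (2 * (γ - γ₀) ^ 2) :=
        mul_le_mul_of_nonneg_right hc (by positivity)
      have hbr : 0 ≤ 4 * γ ^ 2 + 3 * γ₀ * γ ^ 2 - 2 * γ * γ₀ + γ₀ ^ 2 := by
        nlinarith [sq_nonneg (γ - γ₀)]
      have hbr2 : 0 ≤ 2 * (γ - γ₀) ^ 2 * (4 * γ ^ 2 + 3 * γ₀ * γ ^ 2 - 2 * γ * γ₀ + γ₀ ^ 2) := by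
        positivity
      have step1 : (γ₀ * γ - γ₀ ^ 2) ^ 2 * (2 * (1 + γ))
          ≤ 4 * L₀ * ((γ₀ + 1) * γ) * ((γ - γ₀) ^ 2 * (2 + γ)) := by
        nlinarith [hmul, hbr2]
      have k1 : (L₀ - L) * (2 * (1 + γ) * (1 + γ₀)) * (4 * L₀ * ((γ₀ + 1) * γ) ^ 2)
          ≤ ((1 + γ₀) ^ 2 - (1 + γ) ^ 2) * (4 * L₀ * ((γ₀ + 1) * γ) ^ 2) :=
        mul_le_mul_of_nonneg_right h (by positivity)
      have k2 : (γ₀ * γ - γ₀ ^ 2) ^ 2 * (2 * (1 + γ)) * (1 + γ₀)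
          ≤ 4 * L₀ * ((γ₀ + 1) * γ) * ((γ - γ₀) ^ 2 * (2 + γ)) * (1 + γ₀) :=
        mul_le_mul_of_nonneg_right step1 hb.le
      have hfinal : ((2 * L₀ * ((γ₀ + 1) * γ) + (γ₀ * γ - γ₀ ^ 2)) ^ 2) * (2 * (1 + γ) * (1 + γ₀))
          ≤ (4 * L * L₀ * ((γ₀ + 1) * γ) ^ 2) * (2 * (1 + γ) * (1 + γ₀)) := by
        nlinarith [k1, k2]
      exact le_of_mul_le_mul_right hfinal (by positivity)


theorem stmt_0 (γ γ₀ t t₀ : ℝ) (hγ : 0 < γ) (hγ₀ : 0 < γ₀) (ht : 0 < t) (ht₀ : 0 < t₀) :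
    Real.log (1 + γ) / t ≥
      (2 * Real.log (1 + γ₀) / t₀ + γ₀ / (t₀ * (γ₀ + 1)))
        - (γ₀ ^ 2 / (t₀ * (γ₀ + 1))) * (1 / γ)
        - (Real.log (1 + γ₀) / t₀ ^ 2) * t := by
  set L := Real.log (1 + γ) with hLdef
  set L₀ := Real.log (1 + γ₀) with hL0def
  have hL : 0 < L := Real.log_pos (by linarith)
  have hL₀ : 0 < L₀ := Real.log_pos (by linarith)
  have hQ : (0:ℝ) < (γ₀ + 1) * γ := by positivity
  have hQuad : (2 * L₀ * ((γ₀ + 1) * γ) + (γ₀ * γ - γ₀ ^ 2)) * (t * t₀)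
      ≤ L * t₀ ^ 2 * ((γ₀ + 1) * γ) + L₀ * t ^ 2 * ((γ₀ + 1) * γ) := by
    rcases le_or_gt (2 * L₀ * ((γ₀ + 1) * γ) + (γ₀ * γ - γ₀ ^ 2)) 0 with hE | hE
    · have h1 : (2 * L₀ * ((γ₀ + 1) * γ) + (γ₀ * γ - γ₀ ^ 2)) * (t * t₀) ≤ 0 :=
        mul_nonpos_of_nonpos_of_nonneg hE (by positivity)
      nlinarith [mul_pos (mul_pos hL (mul_pos ht₀ ht₀)) hQ,
        mul_pos (mul_pos hL₀ (mul_pos ht ht)) hQ]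
    · have hk := key γ γ₀ hγ hγ₀ hE.le
      nlinarith [sq_nonneg (2 * L * ((γ₀ + 1) * γ) * t₀
          - (2 * L₀ * ((γ₀ + 1) * γ) + (γ₀ * γ - γ₀ ^ 2)) * t),
        mul_pos hL hQ, sq_nonneg t, mul_le_mul_of_nonneg_right hk (sq_nonneg t)]
  rw [ge_iff_le, ← sub_nonneg]
  have heq : L / t - ((2 * L₀ / t₀ + γ₀ / (t₀ * (γ₀ + 1)))
        - (γ₀ ^ 2 / (t₀ * (γ₀ + 1))) * (1 / γ) - (L₀ / t₀ ^ 2) * t)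
      = (L * t₀ ^ 2 * ((γ₀ + 1) * γ) + L₀ * t ^ 2 * ((γ₀ + 1) * γ)
          - (2 * L₀ * ((γ₀ + 1) * γ) + (γ₀ * γ - γ₀ ^ 2)) * (t * t₀))
        / (t * t₀ ^ 2 * ((γ₀ + 1) * γ)) := by
    field_simp
    ring
  rw [heq]
  apply div_nonneg (by linarith) (by positivity)
end

section
/- For all real numbers β > 0, β⁰ > 0, α > 0, α⁰ > 0 with 2α − α⁰ > 0, the inequality β/α ≤ (1/2)·( β²/(β⁰·α⁰) + β⁰/(2α − α⁰) ) holds. -/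
theorem stmt_4 (β β₀ α α₀ : ℝ) (hβ : 0 < β) (hβ₀ : 0 < β₀) (hα : 0 < α) (hα₀ : 0 < α₀)
    (htrust : 0 < 2 * α - α₀) :
    β / α ≤ (1 / 2) * (β ^ 2 / (β₀ * α₀) + β₀ / (2 * α - α₀)) := by
  rw [div_add_div _ _ (by positivity) (by positivity), div_le_iff₀ hα, mul_comm,
    ← sub_nonneg]
  have h1 : 0 ≤ (β * (2 * α - α₀) - β₀ * α)^2 := sq_nonneg _
  have h2 : 0 ≤ (α - α₀)^2 := sq_nonneg _
  field_simp
  rw [le_sub_iff_add_le, le_div_iff₀ (by linarith)]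
  nlinarith [mul_nonneg (mul_nonneg (sq_nonneg β) htrust.le) (sq_nonneg (α - α₀)),
    mul_nonneg hα₀.le (sq_nonneg ((2 * α - α₀) * β - α * β₀)), mul_pos hα htrust]
end

section
/- Let a, a⁰, φ, φ⁰, α, α⁰ be real numbers with φ > 0, φ⁰ > 0, α > 0, α⁰ > 0, a⁰ > 0, and 2a − a⁰ > 0. Set γ⁰ = (a⁰)²/φ⁰. Then ln(1 + a²/φ)/α ≥ 2·ln(1+γ⁰)/α⁰ + γ⁰/(α⁰·(γ⁰+1)) − ((γ⁰)²/(α⁰·(γ⁰+1)))·( φ/(a⁰·(2a − a⁰)) ) − (ln(1+γ⁰)/(α⁰)²)·α. -/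
open intervalIntegral

lemma contint (c : ℝ) (hc : 0 < c) (n : ℕ) :
    IntervalIntegrable (fun s => 1/(c+s)^n) MeasureTheory.volume (0:ℝ) 1 := by
  apply ContinuousOn.intervalIntegrable
  apply ContinuousOn.div continuousOn_const
  · fun_prop
  · intro x hx
    rcases Set.mem_uIcc.mp hx with ⟨h1,_⟩|⟨_,h2⟩ <;> positivity

lemma contint1 (c : ℝ) (hc : 0 < c) :
    IntervalIntegrable (fun s => 1/(c+s)) MeasureTheory.volume (0:ℝ) 1 := by
  have := contint c hc 1
  simpa using this

lemma contint2 (c : ℝ) (hc : 0 < c) :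
    IntervalIntegrable (fun s => 1/(c+s)^2) MeasureTheory.volume (0:ℝ) 1 := contint c hc 2

lemma int1 (c : ℝ) (hc : 0 < c) : ∫ s in (0:ℝ)..1, 1/(c+s) = Real.log (1 + 1/c) := by
  have key : ∫ s in (0:ℝ)..1, 1/(c+s) = Real.log (c+1) - Real.log (c+0) := by
    apply integral_eq_sub_of_hasDerivAt (f := fun x => Real.log (c+x))
    · intro x hx
      have hx0 : 0 < c + x := by
        rcases Set.mem_uIcc.mp hx with ⟨h1,_⟩|⟨_,h2⟩ <;> linarith
      have h1 : HasDerivAt (fun x : ℝ => c + x) 1 x := (hasDerivAt_id x).const_add c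
      have := h1.log hx0.ne'
      simpa [one_div] using this
    · exact contint1 c hc
  rw [key, add_zero, ← Real.log_div (by linarith) hc.ne']
  congr 1
  field_simp

lemma int2 (c : ℝ) (hc : 0 < c) : ∫ s in (0:ℝ)..1, 1/(c+s)^2 = 1/(c*(c+1)) := by
  have key : ∫ s in (0:ℝ)..1, 1/(c+s)^2 = (-(c+1)⁻¹) - (-(c+0)⁻¹) := by
    apply integral_eq_sub_of_hasDerivAt (f := fun x => -(c+x)⁻¹)
    · intro x hx
      have hx0 : 0 < c + x := by
        rcases Set.mem_uIcc.mp hx with ⟨h1,_⟩|⟨_,h2⟩ <;> linarith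
      have h1 : HasDerivAt (fun x : ℝ => c + x) 1 x := (hasDerivAt_id x).const_add c
      have := (h1.inv hx0.ne').neg
      convert this using 1
      · rfl
      · rw [one_div]; ring
    · exact contint2 c hc
  rw [key]
  field_simp
  ring

lemma tangent (t t₀ y y₀ : ℝ) (ht : 0 < t) (ht₀ : 0 < t₀) (hy : 0 < y) (hy₀ : 0 < y₀) :
    1/(t*y) ≥ 3/(t₀*y₀) - t/(t₀^2*y₀) - y/(t₀*y₀^2) := by
  have hp : 0 < t/t₀ := by positivity
  have hq : 0 < y/y₀ := by positivity
  have key : 1 + (t/t₀)^2*(y/y₀) + (t/t₀)*(y/y₀)^2 - 3*((t/t₀)*(y/y₀)) ≥ 0 := by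
    nlinarith [sq_nonneg (t/t₀-1), sq_nonneg (y/y₀-1), sq_nonneg (t/t₀-y/y₀),
      sq_nonneg (t/t₀+y/y₀-2), sq_nonneg ((t/t₀)*(y/y₀)-1), mul_pos hp hq,
      mul_nonneg hp.le (sq_nonneg (y/y₀-1)), mul_nonneg hq.le (sq_nonneg (t/t₀-1)),
      mul_nonneg hp.le (sq_nonneg (t/t₀-1)), mul_nonneg hq.le (sq_nonneg (y/y₀-1))]
  rw [ge_iff_le, ← sub_nonneg]
  have hid : 1/(t*y) - (3/(t₀*y₀) - t/(t₀^2*y₀) - y/(t₀*y₀^2))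
      = 1/(t*y) * (1 + (t/t₀)^2*(y/y₀) + (t/t₀)*(y/y₀)^2 - 3*((t/t₀)*(y/y₀))) := by
    field_simp
    ring
  rw [hid]
  exact mul_nonneg (by positivity) key

lemma main2 (z z₀ t t₀ : ℝ) (hz : 0 < z) (hz₀ : 0 < z₀) (ht : 0 < t) (ht₀ : 0 < t₀) :
    Real.log (1 + 1/z) / t ≥
      Real.log (1 + 1/z₀) / t₀ + (z₀ - z)/(z₀*(z₀+1)*t₀)
        - Real.log (1 + 1/z₀) * (t - t₀) / t₀^2 := by
  have hgint : IntervalIntegrable (fun s => (1/t) * (1/(z+s))) MeasureTheory.volume (0:ℝ) 1 := by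
    exact (contint1 z hz).const_mul (1/t)
  have hhint : IntervalIntegrable
      (fun s => (2/t₀ - t/t₀^2) * (1/(z₀+s)) - ((z-z₀)/t₀) * (1/(z₀+s)^2))
      MeasureTheory.volume (0:ℝ) 1 :=
    ((contint1 z₀ hz₀).const_mul _).sub ((contint2 z₀ hz₀).const_mul _)
  have hmono : ∫ s in (0:ℝ)..1,
        ((2/t₀ - t/t₀^2) * (1/(z₀+s)) - ((z-z₀)/t₀) * (1/(z₀+s)^2))
      ≤ ∫ s in (0:ℝ)..1, (1/t) * (1/(z+s)) := by
    apply integral_mono_on (by norm_num) hhint hgint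
    intro s hs
    obtain ⟨hs0, hs1⟩ := hs
    have hy : 0 < z + s := by linarith
    have hy₀ : 0 < z₀ + s := by linarith
    have := tangent t t₀ (z+s) (z₀+s) ht ht₀ hy hy₀
    have hid : (2/t₀ - t/t₀^2) * (1/(z₀+s)) - ((z-z₀)/t₀) * (1/(z₀+s)^2)
        = 3/(t₀*(z₀+s)) - t/(t₀^2*(z₀+s)) - (z+s)/(t₀*(z₀+s)^2) := by
      field_simp
      ring
    have hid2 : (1/t) * (1/(z+s)) = 1/(t*(z+s)) := by
      rw [one_div_mul_one_div]
    rw [hid, hid2]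
    exact this
  have e1 : ∫ s in (0:ℝ)..1, (1/t) * (1/(z+s)) = Real.log (1 + 1/z) / t := by
    rw [integral_const_mul, int1 z hz]; ring
  have e2 : ∫ s in (0:ℝ)..1,
        ((2/t₀ - t/t₀^2) * (1/(z₀+s)) - ((z-z₀)/t₀) * (1/(z₀+s)^2))
      = (2/t₀ - t/t₀^2) * Real.log (1 + 1/z₀) - ((z-z₀)/t₀) * (1/(z₀*(z₀+1))) := by
    rw [integral_sub ((contint1 z₀ hz₀).const_mul _) ((contint2 z₀ hz₀).const_mul _),
      integral_const_mul, integral_const_mul, int1 z₀ hz₀, int2 z₀ hz₀]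
  rw [e1, e2] at hmono
  have hrw : Real.log (1 + 1/z₀) / t₀ + (z₀ - z)/(z₀*(z₀+1)*t₀)
        - Real.log (1 + 1/z₀) * (t - t₀) / t₀^2
      = (2/t₀ - t/t₀^2) * Real.log (1 + 1/z₀) - ((z-z₀)/t₀) * (1/(z₀*(z₀+1))) := by
    field_simp
    ring
  rw [hrw]
  exact hmono

theorem stmt_6 (a a₀ φ φ₀ α α₀ : ℝ) (hφ : 0 < φ) (hφ₀ : 0 < φ₀) (hα : 0 < α) (hα₀ : 0 < α₀)
    (ha₀ : 0 < a₀) (htrust : 0 < 2 * a - a₀) :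
    Real.log (1 + a ^ 2 / φ) / α ≥
      2 * Real.log (1 + a₀ ^ 2 / φ₀) / α₀
        + (a₀ ^ 2 / φ₀) / (α₀ * (a₀ ^ 2 / φ₀ + 1))
        - ((a₀ ^ 2 / φ₀) ^ 2 / (α₀ * (a₀ ^ 2 / φ₀ + 1))) * (φ / (a₀ * (2 * a - a₀)))
        - (Real.log (1 + a₀ ^ 2 / φ₀) / α₀ ^ 2) * α := by
  set z : ℝ := φ / (a₀ * (2 * a - a₀)) with hzdef
  set z₀ : ℝ := φ₀ / a₀ ^ 2 with hz₀def
  have hz : 0 < z := by positivity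
  have hz₀ : 0 < z₀ := by positivity
  have h1z₀ : 1/z₀ = a₀ ^ 2 / φ₀ := by rw [hz₀def]; field_simp
  have hmain := main2 z z₀ α α₀ hz hz₀ hα hα₀
  rw [h1z₀] at hmain
  -- LHS comparison: a^2/φ ≥ 1/z
  have hlog : Real.log (1 + 1/z) ≤ Real.log (1 + a ^ 2 / φ) := by
    apply Real.log_le_log (by positivity)
    have : a₀ * (2 * a - a₀) ≤ a ^ 2 := by nlinarith [sq_nonneg (a - a₀)]
    have h2 : 1/z ≤ a ^ 2 / φ := by
      rw [hzdef, one_div_div]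
      exact (div_le_div_iff_of_pos_right hφ).mpr this
    linarith
  have hdiv : Real.log (1 + 1/z) / α ≤ Real.log (1 + a ^ 2 / φ) / α :=
    (div_le_div_iff_of_pos_right hα).mpr hlog
  -- RHS identity
  have hrhs : Real.log (1 + a₀ ^ 2 / φ₀) / α₀ + (z₀ - z)/(z₀*(z₀+1)*α₀)
        - Real.log (1 + a₀ ^ 2 / φ₀) * (α - α₀) / α₀^2
      = 2 * Real.log (1 + a₀ ^ 2 / φ₀) / α₀
        + (a₀ ^ 2 / φ₀) / (α₀ * (a₀ ^ 2 / φ₀ + 1))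
        - ((a₀ ^ 2 / φ₀) ^ 2 / (α₀ * (a₀ ^ 2 / φ₀ + 1))) * z
        - (Real.log (1 + a₀ ^ 2 / φ₀) / α₀ ^ 2) * α := by
    rw [hz₀def]
    have hne : a₀ * (2 * a - a₀) ≠ 0 := by positivity
    field_simp
    ring
  rw [hrhs] at hmain
  linarith
end
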